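/- Let (G,S) be the Cayley graph of a finitely generated abelian group G ≅ ℤ^m ⊕ ⊕_{i=1}^l ℤ_{q_i}. Then there exists a constant C = C(m,S) such that for every p ∈ G, every R > 0, and every function f : B_{3R}(p) ∪ ∂B_{3R}(p) → ℝ, one has Σ_{x ∈ B_R(p)} (f(x) − f_{B_R})² ≤ C R² Σ_{x,y ∈ B_{3R}(p), x ~ y} (f(x) − f(y))², where f_{B_R} = (1/|B_R(p)|) Σ_{x ∈ B_R(p)} f(x). -/

import Mathlib

open MvPolynomial

/-- The discrete Laplacian on the Cayley graph of an abelian group `G` with a finite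
(symmetric, listed with possible repetitions, hence a multiset) generating set `S`:
`L^S f x = ∑_{s ∈ S} (f (x + s) - f x)`, counted with multiplicity. -/
def lap {G : Type} [AddCommGroup G] (S : Multiset G) (f : G → ℝ) : G → ℝ := fun x =>
  (S.map fun s => f (x + s) - f x).sum

/-- The squared gradient `|∇f|²(x) = ∑_{s ∈ S} (f (x + s) - f x)²`, with multiplicity. -/
def gradSq {G : Type} [AddCommGroup G] (S : Multiset G) (f : G → ℝ) (x : G) : ℝ :=
  (S.map fun s => (f (x + s) - f x) ^ 2).sum

/-- The word metric `d^S(x,y)`: the least `k` such that `y - x` is a sum of `k`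
elements of `S` (i.e. the combinatorial distance in the Cayley graph). -/
noncomputable def wdist {G : Type} [AddCommGroup G] (S : Multiset G) (x y : G) : ℕ :=
  sInf {k : ℕ | ∃ w : Fin k → G, (∀ i, w i ∈ S) ∧ x + ∑ i, w i = y}

/-- The closed ball `B_R(x) = {y : d^S(x,y) ≤ R}` in the word metric. -/
def ball {G : Type} [AddCommGroup G] (S : Multiset G) (x : G) (R : ℝ) : Set G :=
  {y | (wdist S x y : ℝ) ≤ R}

/-- The finitely generated abelian group `ℤ^m ⊕ ⊕_{i=1}^l ℤ_{q i}`. -/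
abbrev AbG (m l : ℕ) (q : Fin l → ℕ) : Type := (Fin m → ℤ) × (∀ i : Fin l, ZMod (q i))

namespace PI
variable {G : Type} [AddCommGroup G] {S : Multiset G}

def WSet (S : Multiset G) (x y : G) : Set ℕ :=
  {k : ℕ | ∃ w : Fin k → G, (∀ i, w i ∈ S) ∧ x + ∑ i, w i = y}

lemma wdist_def (x y : G) : wdist S x y = sInf (WSet S x y) := rfl

lemma wdist_le {x y : G} {k : ℕ} (w : Fin k → G) (hw : ∀ i, w i ∈ S)
    (hsum : x + ∑ i, w i = y) : wdist S x y ≤ k :=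
  Nat.sInf_le ⟨w, hw, hsum⟩

lemma list_sum_map_neg (L : List G) : (L.map (fun s => -s)).sum = -L.sum := by
  induction L with
  | nil => simp
  | cons h t ih => simp [ih, neg_add, add_comm]

lemma exists_word_of_gen (hsym : S.map (fun s => -s) = S)
    (hgen : AddSubgroup.closure {s : G | s ∈ S} = ⊤) (g : G) :
    ∃ (k : ℕ) (w : Fin k → G), (∀ i, w i ∈ S) ∧ ∑ i, w i = g := by
  have hg : g ∈ AddSubgroup.closure {s : G | s ∈ S} := by rw [hgen]; trivial
  have key : ∃ L : List G, (∀ a ∈ L, a ∈ S) ∧ L.sum = g := by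
    induction hg using AddSubgroup.closure_induction with
    | mem a ha => exact ⟨[a], by simpa using ha, by simp⟩
    | zero => exact ⟨[], by simp, by simp⟩
    | add a b _ _ iha ihb =>
      obtain ⟨L1, h1, e1⟩ := iha
      obtain ⟨L2, h2, e2⟩ := ihb
      refine ⟨L1 ++ L2, ?_, by simp [e1, e2]⟩
      intro a ha
      rcases List.mem_append.1 ha with h | h
      · exact h1 a h
      · exact h2 a h
    | neg a _ ih =>
      obtain ⟨L, hL, eL⟩ := ih
      refine ⟨L.map (fun s => -s), ?_, ?_⟩
      · intro a ha
        obtain ⟨b, hb, rfl⟩ := List.mem_map.1 ha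
        have : -b ∈ S.map (fun s => -s) := Multiset.mem_map_of_mem _ (hL b hb)
        rwa [hsym] at this
      · rw [list_sum_map_neg, eL]
  obtain ⟨L, hL, eL⟩ := key
  refine ⟨L.length, L.get, fun i => hL _ (L.get_mem i), ?_⟩
  rw [← eL]
  conv_rhs => rw [← List.ofFn_get L]
  rw [List.sum_ofFn]

section
variable (hsym : S.map (fun s => -s) = S)
    (hgen : AddSubgroup.closure {s : G | s ∈ S} = ⊤)
include hsym hgen

lemma wset_nonempty (x y : G) : (WSet S x y).Nonempty := by
  obtain ⟨k, w, hw, hs⟩ := exists_word_of_gen hsym hgen (y - x)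
  exact ⟨k, w, hw, by rw [hs]; abel⟩

lemma exists_geodesic (x y : G) :
    ∃ w : Fin (wdist S x y) → G, (∀ i, w i ∈ S) ∧ x + ∑ i, w i = y :=
  Nat.sInf_mem (wset_nonempty hsym hgen x y)

end

lemma wdist_self (x : G) : wdist S x x = 0 :=
  Nat.le_zero.1 (wdist_le (fun i => i.elim0) (fun i => i.elim0) (by simp))

lemma wdist_translate (x y z : G) : wdist S (x + z) (y + z) = wdist S x y := by
  unfold wdist
  congr 1
  ext k
  constructor
  · rintro ⟨w, hw, hs⟩
    exact ⟨w, hw, by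
      have : x + z + ∑ i, w i = x + ∑ i, w i + z := by abel
      rw [this] at hs; exact add_right_cancel hs⟩
  · rintro ⟨w, hw, hs⟩
    exact ⟨w, hw, by rw [show x + z + ∑ i, w i = x + ∑ i, w i + z by abel, hs]⟩

section
variable (hsym : S.map (fun s => -s) = S)
    (hgen : AddSubgroup.closure {s : G | s ∈ S} = ⊤)
include hsym hgen

lemma wdist_triangle (x y z : G) : wdist S x z ≤ wdist S x y + wdist S y z := by
  obtain ⟨w1, hw1, hs1⟩ := exists_geodesic hsym hgen x y
  obtain ⟨w2, hw2, hs2⟩ := exists_geodesic hsym hgen y z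
  refine wdist_le (Fin.append w1 w2) ?_ ?_
  · intro i
    rcases lt_or_ge (i : ℕ) (wdist S x y) with h | h
    · have : i = Fin.castAdd _ ⟨i, h⟩ := by ext; simp
      rw [this, Fin.append_left]; exact hw1 _
    · have : i = Fin.natAdd _ ⟨i - wdist S x y, by omega⟩ := by
        ext; simp; omega
      rw [this, Fin.append_right]; exact hw2 _
  · rw [Fin.sum_univ_add]
    simp only [Fin.append_left, Fin.append_right]
    rw [← add_assoc, hs1, hs2]

omit hgen in
lemma mem_S_neg {s : G} (hs : s ∈ S) : -s ∈ S := by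
  have : -s ∈ S.map (fun s => -s) := Multiset.mem_map_of_mem _ hs
  rwa [hsym] at this

lemma wdist_symm (x y : G) : wdist S x y = wdist S y x := by
  have key : ∀ a b : G, wdist S a b ≤ wdist S b a := by
    intro a b
    obtain ⟨w, hw, hs⟩ := exists_geodesic hsym hgen b a
    refine wdist_le (fun i => -(w i)) (fun i => mem_S_neg hsym (hw i)) ?_
    have h1 : ∑ i, -(w i) = -∑ i, w i := by rw [Finset.sum_neg_distrib]
    have h2 : a + -∑ i, w i = (b + ∑ i, w i) + -∑ i, w i := by rw [hs]
    rw [h1, h2]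
    abel
  exact le_antisymm (key x y) (key y x)

lemma eq_of_wdist_eq_zero {x y : G} (h : wdist S x y = 0) : x = y := by
  obtain ⟨w, hw, hs⟩ := exists_geodesic hsym hgen x y
  have : ∑ i, w i = 0 := by
    apply Finset.sum_eq_zero
    intro i _
    exact absurd i.isLt (by omega)
  rw [this, add_zero] at hs
  exact hs

end

section
variable (hsym : S.map (fun s => -s) = S)
    (hgen : AddSubgroup.closure {s : G | s ∈ S} = ⊤)
include hsym hgen

lemma natBall_finite (p : G) (n : ℕ) : {y : G | wdist S p y ≤ n}.Finite := by
  classical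
  induction n with
  | zero =>
    apply Set.Finite.subset (Set.finite_singleton p)
    intro y hy
    simp only [Set.mem_setOf_eq, Nat.le_zero] at hy
    exact (eq_of_wdist_eq_zero hsym hgen hy).symm
  | succ n ih =>
    apply Set.Finite.subset
      (Set.Finite.union ih (Set.Finite.biUnion (S.toFinset : Finset G).finite_toSet
        (fun s _ => ih.image (fun z => z + s))))
    intro y hy
    simp only [Set.mem_setOf_eq] at hy
    obtain ⟨w, hw, hs⟩ := exists_geodesic hsym hgen p y
    rcases Nat.eq_zero_or_pos (wdist S p y) with h0 | hpos
    · left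
      have : p = y := eq_of_wdist_eq_zero hsym hgen h0
      simp [Set.mem_setOf_eq, ← this, wdist_self]
    · right
      obtain ⟨j, hj⟩ : ∃ j, wdist S p y = j + 1 := ⟨wdist S p y - 1, by omega⟩
      set z := p + ∑ i : Fin j, w (Fin.cast hj.symm i.castSucc) with hz
      have hzw : wdist S p z ≤ j :=
        wdist_le _ (fun i => hw _) rfl
      have key : y = p + ∑ i : Fin (j + 1), w (Fin.cast hj.symm i) := by
        rw [Fin.sum_congr' w hj.symm, hs]
      have hyz : y = z + w (Fin.cast hj.symm (Fin.last j)) := by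
        refine key.trans ?_
        rw [Fin.sum_univ_castSucc, hz]
        abel
      refine Set.mem_biUnion (Multiset.mem_toFinset.2 (hw _)) ⟨z, ?_, hyz.symm⟩
      simp only [Set.mem_setOf_eq]
      omega
  
lemma ball_finite (p : G) (R : ℝ) : (ball S p R).Finite := by
  apply Set.Finite.subset (natBall_finite hsym hgen p ⌊R⌋₊)
  intro y hy
  exact Nat.le_floor hy

end

lemma wdist_add_left (x c : G) : wdist S x (x + c) = wdist S 0 c := by
  have := wdist_translate (S := S) 0 c x
  rwa [zero_add, add_comm c x] at this

lemma wdist_zero_sub (x y : G) : wdist S 0 (y - x) = wdist S x y := by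
  have := wdist_translate (S := S) x y (-x)
  rwa [add_neg_cancel, ← sub_eq_add_neg] at this

lemma pair_sum_bound
    (hsym : S.map (fun s => -s) = S)
    (hgen : AddSubgroup.closure {s : G | s ∈ S} = ⊤)
    (p : G) (R : ℝ) (hR : 0 ≤ R) (f : G → ℝ)
    (FR F3 FD : Finset G)
    (hFR : ∀ x, x ∈ FR ↔ (wdist S p x : ℝ) ≤ R)
    (hF3 : ∀ x, x ∈ F3 ↔ (wdist S p x : ℝ) ≤ 3 * R)
    (hFD : ∀ x, x ∈ FD ↔ (wdist S 0 x : ℝ) ≤ 2 * R) :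
    ∑ x ∈ FR, ∑ y ∈ FR, (f x - f y) ^ 2
      ≤ 2 * R * ((FD.card : ℝ) * (2 * R *
          ∑ x ∈ F3, (S.map fun s =>
            Set.indicator (ball S p (3 * R)) (fun u => (f u - f x) ^ 2) (x + s)).sum)) := by
  classical
  choose W hWS hWsum using fun d : G => exists_geodesic hsym hgen 0 d
  set k : G → ℕ := fun d => wdist S 0 d with hk
  set We : G → ℕ → G := fun d n => if h : n < k d then W d ⟨n, h⟩ else 0 with hWe
  set ps : G → ℕ → G := fun d i => ∑ j ∈ Finset.range i, We d j with hps
  have hWeS : ∀ d n, n < k d → We d n ∈ S := by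
    intro d n h
    simp only [hWe, dif_pos h]
    exact hWS d _
  have hps_succ : ∀ d i, ps d (i + 1) = ps d i + We d i := fun d i => Finset.sum_range_succ _ i
  have hps_k : ∀ d, ps d (k d) = d := by
    intro d
    have h0 := hWsum d
    rw [zero_add] at h0
    have h1 : ps d (k d) = ∑ i : Fin (k d), We d i := by
      rw [Fin.sum_univ_eq_sum_range (fun j => We d j) (k d)]
    rw [h1]
    have h2 : ∑ i : Fin (k d), We d ↑i = ∑ i : Fin (wdist S 0 d), W d i :=
      Finset.sum_congr rfl (fun i _ => by simp only [hWe, dif_pos i.isLt]; rfl)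
    rw [h2]
    exact h0
  have hps_dist : ∀ d i, i ≤ k d → wdist S 0 (ps d i) ≤ i := by
    intro d i hi
    refine wdist_le (fun j : Fin i => We d j) (fun j => hWeS d j (lt_of_lt_of_le j.isLt hi)) ?_
    rw [zero_add, Fin.sum_univ_eq_sum_range]
  set E : G → G → ℝ := fun z s =>
    Set.indicator (ball S p (3 * R)) (fun u => (f u - f z) ^ 2) (z + s) with hE
  have hE_nonneg : ∀ z s, 0 ≤ E z s := fun z s =>
    Set.indicator_nonneg (fun u _ => sq_nonneg _) _
  set T := ∑ x ∈ F3, (S.map fun s => E x s).sum with hT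
  have hT_nonneg : 0 ≤ T := by
    apply Finset.sum_nonneg
    intro x _
    apply Multiset.sum_nonneg
    intro a ha
    obtain ⟨s, _, rfl⟩ := Multiset.mem_map.1 ha
    exact hE_nonneg x s
  -- basic distance facts
  have hkd2R : ∀ x ∈ FR, ∀ y ∈ FR, (k (y - x) : ℝ) ≤ 2 * R := by
    intro x hx y hy
    have h1 : k (y - x) = wdist S x y := wdist_zero_sub x y
    have h2 : wdist S x y ≤ wdist S p x + wdist S p y := by
      calc wdist S x y ≤ wdist S x p + wdist S p y := wdist_triangle hsym hgen x p y
        _ = wdist S p x + wdist S p y := by rw [wdist_symm hsym hgen x p]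
    have := (hFR x).1 hx
    have := (hFR y).1 hy
    rw [h1]
    push_cast
    calc (wdist S x y : ℝ) ≤ (wdist S p x : ℝ) + (wdist S p y : ℝ) := by exact_mod_cast h2
      _ ≤ R + R := by linarith
      _ = 2 * R := by ring
  -- per-pair bound
  have pair : ∀ x ∈ FR, ∀ y ∈ FR,
      (f x - f y) ^ 2 ≤ 2 * R * ∑ i ∈ Finset.range (k (y - x)), E (x + ps (y - x) i) (We (y - x) i) := by
    intro x hx y hy
    set d := y - x with hd
    have hxd : x + d = y := by rw [hd]; abel
    have tele : f y - f x = ∑ i ∈ Finset.range (k d), (f (x + ps d (i + 1)) - f (x + ps d i)) := by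
      rw [Finset.sum_range_sub (f := fun i => f (x + ps d i))]
      rw [hps_k d, hxd]
      have : ps d 0 = 0 := rfl
      rw [this, add_zero]
    have cs : (f x - f y) ^ 2
        ≤ (k d : ℝ) * ∑ i ∈ Finset.range (k d), (f (x + ps d (i + 1)) - f (x + ps d i)) ^ 2 := by
      have h1 : (f x - f y) ^ 2 = (f y - f x) ^ 2 := by ring
      rw [h1, tele]
      have := sq_sum_le_card_mul_sum_sq (s := Finset.range (k d))
        (f := fun i => f (x + ps d (i + 1)) - f (x + ps d i))
      simpa using this
    have hEk : ∀ i ∈ Finset.range (k d),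
        (f (x + ps d (i + 1)) - f (x + ps d i)) ^ 2 = E (x + ps d i) (We d i) := by
      intro i hi
      rw [Finset.mem_range] at hi
      have hmem : x + ps d (i + 1) ∈ ball S p (3 * R) := by
        have h1 : wdist S p (x + ps d (i + 1)) ≤ wdist S p x + wdist S 0 (ps d (i + 1)) := by
          calc wdist S p (x + ps d (i + 1)) ≤ wdist S p x + wdist S x (x + ps d (i + 1)) :=
              wdist_triangle hsym hgen p x _
            _ = wdist S p x + wdist S 0 (ps d (i + 1)) := by rw [wdist_add_left]
        have h2 : wdist S 0 (ps d (i + 1)) ≤ i + 1 := hps_dist d (i + 1) hi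
        have h3 : (i : ℝ) + 1 ≤ (k d : ℝ) := by exact_mod_cast Nat.succ_le_of_lt hi
        have h4 : (k d : ℝ) ≤ 2 * R := hkd2R x hx y hy
        have h5 := (hFR x).1 hx
        show (wdist S p (x + ps d (i + 1)) : ℝ) ≤ 3 * R
        calc (wdist S p (x + ps d (i + 1)) : ℝ)
            ≤ (wdist S p x : ℝ) + (wdist S 0 (ps d (i + 1)) : ℝ) := by exact_mod_cast h1
          _ ≤ R + ((i : ℝ) + 1) := by
              have : (wdist S 0 (ps d (i + 1)) : ℝ) ≤ (i : ℝ) + 1 := by exact_mod_cast h2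
              linarith
          _ ≤ R + 2 * R := by linarith
          _ = 3 * R := by ring
      have hzs : x + ps d i + We d i = x + ps d (i + 1) := by
        rw [hps_succ d i, add_assoc]
      rw [hE]
      simp only []
      rw [hzs, Set.indicator_of_mem hmem]
    calc (f x - f y) ^ 2
        ≤ (k d : ℝ) * ∑ i ∈ Finset.range (k d), (f (x + ps d (i + 1)) - f (x + ps d i)) ^ 2 := cs
      _ = (k d : ℝ) * ∑ i ∈ Finset.range (k d), E (x + ps d i) (We d i) := by
          rw [Finset.sum_congr rfl hEk]
      _ ≤ 2 * R * ∑ i ∈ Finset.range (k d), E (x + ps d i) (We d i) := by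
          apply mul_le_mul_of_nonneg_right (hkd2R x hx y hy)
          exact Finset.sum_nonneg fun i _ => hE_nonneg _ _
  -- sum the per-pair bound
  have step1 : ∑ x ∈ FR, ∑ y ∈ FR, (f x - f y) ^ 2
      ≤ 2 * R * ∑ x ∈ FR, ∑ y ∈ FR,
          ∑ i ∈ Finset.range (k (y - x)), E (x + ps (y - x) i) (We (y - x) i) := by
    rw [Finset.mul_sum]
    apply Finset.sum_le_sum
    intro x hx
    rw [Finset.mul_sum]
    apply Finset.sum_le_sum
    intro y hy
    exact pair x hx y hy
  -- replace inner sum over y by sum over differences d ∈ FD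
  have step2 : ∀ x ∈ FR, ∑ y ∈ FR, ∑ i ∈ Finset.range (k (y - x)), E (x + ps (y - x) i) (We (y - x) i)
      ≤ ∑ d ∈ FD, ∑ i ∈ Finset.range (k d), E (x + ps d i) (We d i) := by
    intro x hx
    have himg : ∑ y ∈ FR, ∑ i ∈ Finset.range (k (y - x)), E (x + ps (y - x) i) (We (y - x) i)
        = ∑ d ∈ FR.image (fun y => y - x), ∑ i ∈ Finset.range (k d), E (x + ps d i) (We d i) := by
      rw [Finset.sum_image]
      intro a _ b _ h
      exact sub_left_injective h
    rw [himg]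
    apply Finset.sum_le_sum_of_subset_of_nonneg
    · intro d hd
      obtain ⟨y, hy, rfl⟩ := Finset.mem_image.1 hd
      apply (hFD _).2
      rw [wdist_zero_sub]
      have h2 : wdist S x y ≤ wdist S p x + wdist S p y := by
        calc wdist S x y ≤ wdist S x p + wdist S p y := wdist_triangle hsym hgen x p y
          _ = wdist S p x + wdist S p y := by rw [wdist_symm hsym hgen x p]
      have hx' := (hFR x).1 hx
      have hy' := (hFR y).1 hy
      calc (wdist S x y : ℝ) ≤ (wdist S p x : ℝ) + (wdist S p y : ℝ) := by exact_mod_cast h2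
        _ ≤ R + R := by linarith
        _ = 2 * R := by ring
    · intro d _ _
      exact Finset.sum_nonneg fun i _ => hE_nonneg _ _
  -- swap sums and bound per (d, i)
  have step3 : ∑ x ∈ FR, ∑ d ∈ FD, ∑ i ∈ Finset.range (k d), E (x + ps d i) (We d i)
      ≤ (FD.card : ℝ) * (2 * R * T) := by
    rw [Finset.sum_comm]
    have inner : ∀ d ∈ FD, ∑ x ∈ FR, ∑ i ∈ Finset.range (k d), E (x + ps d i) (We d i)
        ≤ 2 * R * T := by
      intro d hd
      rw [Finset.sum_comm]
      have hkd : (k d : ℝ) ≤ 2 * R := (hFD d).1 hd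
      have perI : ∀ i ∈ Finset.range (k d), ∑ x ∈ FR, E (x + ps d i) (We d i) ≤ T := by
        intro i hi
        rw [Finset.mem_range] at hi
        have hs : We d i ∈ S := hWeS d i hi
        have himg : ∑ x ∈ FR, E (x + ps d i) (We d i)
            = ∑ z ∈ FR.image (fun x => x + ps d i), E z (We d i) := by
          rw [Finset.sum_image]
          intro a _ b _ h
          exact add_right_cancel h
        rw [himg]
        calc ∑ z ∈ FR.image (fun x => x + ps d i), E z (We d i)
            ≤ ∑ z ∈ F3, E z (We d i) := by
              apply Finset.sum_le_sum_of_subset_of_nonneg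
              · intro z hz
                obtain ⟨x, hx, rfl⟩ := Finset.mem_image.1 hz
                apply (hF3 _).2
                have h1 : wdist S p (x + ps d i) ≤ wdist S p x + wdist S 0 (ps d i) := by
                  calc wdist S p (x + ps d i) ≤ wdist S p x + wdist S x (x + ps d i) :=
                      wdist_triangle hsym hgen p x _
                    _ = wdist S p x + wdist S 0 (ps d i) := by rw [wdist_add_left]
                have h2 : wdist S 0 (ps d i) ≤ i := hps_dist d i (le_of_lt hi)
                have h3 : (i : ℝ) ≤ (k d : ℝ) := by exact_mod_cast le_of_lt hi
                have h5 := (hFR x).1 hx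
                calc (wdist S p (x + ps d i) : ℝ)
                    ≤ (wdist S p x : ℝ) + (wdist S 0 (ps d i) : ℝ) := by exact_mod_cast h1
                  _ ≤ R + (i : ℝ) := by
                      have : (wdist S 0 (ps d i) : ℝ) ≤ (i : ℝ) := by exact_mod_cast h2
                      linarith
                  _ ≤ R + 2 * R := by linarith
                  _ = 3 * R := by ring
              · intro z _ _
                exact hE_nonneg _ _
          _ ≤ T := by
              rw [hT]
              apply Finset.sum_le_sum
              intro z _
              apply Multiset.single_le_sum
              · intro a ha
                obtain ⟨s, _, rfl⟩ := Multiset.mem_map.1 ha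
                exact hE_nonneg z s
              · exact Multiset.mem_map_of_mem _ hs
      calc ∑ i ∈ Finset.range (k d), ∑ x ∈ FR, E (x + ps d i) (We d i)
          ≤ ∑ i ∈ Finset.range (k d), T := Finset.sum_le_sum perI
        _ = (k d : ℝ) * T := by rw [Finset.sum_const, Finset.card_range, nsmul_eq_mul]
        _ ≤ 2 * R * T := mul_le_mul_of_nonneg_right hkd hT_nonneg
    calc ∑ d ∈ FD, ∑ x ∈ FR, ∑ i ∈ Finset.range (k d), E (x + ps d i) (We d i)
        ≤ ∑ _d ∈ FD, 2 * R * T := Finset.sum_le_sum inner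
      _ = (FD.card : ℝ) * (2 * R * T) := by rw [Finset.sum_const, nsmul_eq_mul]
  calc ∑ x ∈ FR, ∑ y ∈ FR, (f x - f y) ^ 2
      ≤ 2 * R * ∑ x ∈ FR, ∑ y ∈ FR,
          ∑ i ∈ Finset.range (k (y - x)), E (x + ps (y - x) i) (We (y - x) i) := step1
    _ ≤ 2 * R * ∑ x ∈ FR, ∑ d ∈ FD, ∑ i ∈ Finset.range (k d), E (x + ps d i) (We d i) := by
        apply mul_le_mul_of_nonneg_left _ (by linarith : (0:ℝ) ≤ 2 * R)
        exact Finset.sum_le_sum step2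
    _ ≤ 2 * R * ((FD.card : ℝ) * (2 * R * T)) := by
        apply mul_le_mul_of_nonneg_left step3 (by linarith : (0:ℝ) ≤ 2 * R)


section
variable (hsym : S.map (fun s => -s) = S)
    (hgen : AddSubgroup.closure {s : G | s ∈ S} = ⊤)
include hsym hgen

lemma wdist_zero_add (g h : G) : wdist S 0 (g + h) ≤ wdist S 0 g + wdist S 0 h := by
  calc wdist S 0 (g + h) ≤ wdist S 0 g + wdist S g (g + h) := wdist_triangle hsym hgen 0 g _
    _ = wdist S 0 g + wdist S 0 h := by rw [wdist_add_left]

lemma wdist_zero_nsmul (n : ℕ) (g : G) : wdist S 0 (n • g) ≤ n * wdist S 0 g := by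
  induction n with
  | zero => simp [wdist_self]
  | succ n ih =>
    have : (n + 1) • g = n • g + g := by rw [add_smul, one_smul]
    rw [this]
    calc wdist S 0 (n • g + g) ≤ wdist S 0 (n • g) + wdist S 0 g :=
        wdist_zero_add hsym hgen _ _
      _ ≤ n * wdist S 0 g + wdist S 0 g := by omega
      _ = (n + 1) * wdist S 0 g := by ring

lemma wdist_zero_sum {ι : Type*} (t : Finset ι) (g : ι → G) :
    wdist S 0 (∑ j ∈ t, g j) ≤ ∑ j ∈ t, wdist S 0 (g j) := by
  classical
  induction t using Finset.induction_on with
  | empty => simp [wdist_self]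
  | insert _ _ hnot ih =>
    rename_i a t'
    rw [Finset.sum_insert hnot, Finset.sum_insert hnot]
    calc wdist S 0 (g a + ∑ j ∈ t', g j)
        ≤ wdist S 0 (g a) + wdist S 0 (∑ j ∈ t', g j) := wdist_zero_add hsym hgen _ _
      _ ≤ wdist S 0 (g a) + ∑ j ∈ t', wdist S 0 (g j) := by omega

end

lemma nsmul_single_int {m' : ℕ} (j : Fin m') (n : ℕ) :
    (n • Pi.single j (1 : ℤ) : Fin m' → ℤ) = Pi.single j (n : ℤ) := by
  funext x
  by_cases h : x = j <;> simp [Pi.single_apply, h]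

variable {m l : ℕ} {q : Fin l → ℕ}

lemma upper_card {S : Multiset (AbG m l q)} (Knat : ℕ)
    (hK : ∀ s ∈ S, ∀ j, |(Prod.fst s : Fin m → ℤ) j| ≤ (Knat : ℤ))
    (hsym : (S : Multiset (AbG m l q)).map (fun s => -s) = S)
    (hgen : AddSubgroup.closure {s : AbG m l q | s ∈ S} = ⊤)
    [Fintype (∀ i : Fin l, ZMod (q i))]
    (n : ℕ) (B : Finset (AbG m l q)) (hB : ∀ x ∈ B, wdist S 0 x ≤ n) :
    B.card ≤ (2 * (n * Knat) + 1) ^ m * Fintype.card (∀ i : Fin l, ZMod (q i)) := by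
  classical
  set N : ℤ := ((n * Knat : ℕ) : ℤ)
  have hsub : B ⊆ (Fintype.piFinset fun _ : Fin m => Finset.Icc (-N) N) ×ˢ Finset.univ := by
    intro y hy
    rw [Finset.mem_product]
    refine ⟨?_, Finset.mem_univ _⟩
    rw [Fintype.mem_piFinset]
    intro j
    rw [Finset.mem_Icc, ← abs_le]
    -- coordinate bound
    obtain ⟨w, hw, hws⟩ := exists_geodesic hsym hgen 0 y
    rw [zero_add] at hws
    have hcoord : (y.1 : Fin m → ℤ) j = ∑ i : Fin (wdist S 0 y), ((w i).1 : Fin m → ℤ) j := by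
      have h5 := congrArg (fun z : AbG m l q => z.1 j) hws
      rw [← h5, Prod.fst_sum, Finset.sum_apply]
    rw [hcoord]
    calc |∑ i : Fin (wdist S 0 y), ((w i).1 : Fin m → ℤ) j|
        ≤ ∑ i : Fin (wdist S 0 y), |((w i).1 : Fin m → ℤ) j| := Finset.abs_sum_le_sum_abs _ _
      _ ≤ ∑ _i : Fin (wdist S 0 y), (Knat : ℤ) := Finset.sum_le_sum fun i _ => hK _ (hw i) j
      _ = (wdist S 0 y : ℤ) * Knat := by rw [Finset.sum_const, Finset.card_univ,
          Fintype.card_fin, nsmul_eq_mul]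
      _ ≤ N := by
          have := hB y hy
          simp only [N]
          push_cast
          have : (wdist S 0 y : ℤ) ≤ n := by exact_mod_cast this
          nlinarith [Int.ofNat_nonneg Knat]
  calc B.card ≤ _ := Finset.card_le_card hsub
    _ ≤ (2 * (n * Knat) + 1) ^ m * Fintype.card (∀ i : Fin l, ZMod (q i)) := by
        rw [Finset.card_product, Fintype.card_piFinset]
        apply Nat.mul_le_mul
        · apply le_of_eq
          rw [Finset.prod_const, Finset.card_univ, Fintype.card_fin]
          congr 1
          rw [Int.card_Icc]
          simp only [N]
          push_cast
          omega
        · rw [Finset.card_univ]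

lemma lower_card {S : Multiset (AbG m l q)}
    (hsym : (S : Multiset (AbG m l q)).map (fun s => -s) = S)
    (hgen : AddSubgroup.closure {s : AbG m l q | s ∈ S} = ⊤)
    (D : ℕ) (hD : ∀ j : Fin m, wdist S 0 ((Pi.single j 1, 0) : AbG m l q) ≤ D)
    (N' : ℕ) (p : AbG m l q) (B : Finset (AbG m l q))
    (hB : ∀ x, wdist S p x ≤ m * (D * N') → x ∈ B) :
    (N' + 1) ^ m ≤ B.card := by
  classical
  set e : Fin m → AbG m l q := fun j => (Pi.single j 1, 0) with he
  set ι : (Fin m → Fin (N' + 1)) → AbG m l q :=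
    fun a => p + ((fun j => ((a j : ℕ) : ℤ)), 0) with hι
  have hv : ∀ a : Fin m → Fin (N' + 1),
      (((fun j => ((a j : ℕ) : ℤ)), 0) : AbG m l q) = ∑ j, ((a j : ℕ) • e j) := by
    intro a
    have h1 : ∀ j, ((a j : ℕ) • e j) = ((Pi.single j ((a j : ℕ) : ℤ) : Fin m → ℤ), 0) := by
      intro j
      rw [he]
      ext
      · simp only [Prod.smul_fst, nsmul_single_int]
      · simp
    rw [Finset.sum_congr rfl fun j _ => h1 j]
    ext
    · rw [Prod.fst_sum]
      simp only
      rw [Finset.univ_sum_single (fun j => ((a j : ℕ) : ℤ))]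
    · rw [Prod.snd_sum]
      simp
  have hmem : ∀ a, ι a ∈ B := by
    intro a
    apply hB
    have h1 : wdist S p (ι a) = wdist S 0 (((fun j => ((a j : ℕ) : ℤ)), 0) : AbG m l q) := by
      rw [hι]; exact wdist_add_left p _
    rw [h1, hv a]
    calc wdist S 0 (∑ j, (a j : ℕ) • e j)
        ≤ ∑ j, wdist S 0 ((a j : ℕ) • e j) := wdist_zero_sum hsym hgen _ _
      _ ≤ ∑ j, (a j : ℕ) * wdist S 0 (e j) :=
          Finset.sum_le_sum fun j _ => wdist_zero_nsmul hsym hgen _ _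
      _ ≤ ∑ _j : Fin m, N' * D := by
          apply Finset.sum_le_sum
          intro j _
          exact Nat.mul_le_mul (Fin.is_le _) (hD j)
      _ = m * (D * N') := by
          rw [Finset.sum_const, Finset.card_univ, Fintype.card_fin, smul_eq_mul]
          ring
  have hinj : Function.Injective ι := by
    intro a b hab
    rw [hι] at hab
    have h2 := add_left_cancel hab
    have h3 := congrArg Prod.fst h2
    funext j
    have h4 := congrFun h3 j
    simp only at h4
    ext
    exact_mod_cast h4
  calc (N' + 1) ^ m = Fintype.card (Fin m → Fin (N' + 1)) := by
        rw [Fintype.card_fun]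
        simp
    _ ≤ B.card := by
        rw [← Finset.card_univ]
        exact Finset.card_le_card_of_injOn ι (fun a _ => hmem a) (hinj.injOn)


end PI

lemma variance_le {α : Type*} (B : Finset α) (hB : B.Nonempty) (f : α → ℝ) :
    ∑ x ∈ B, (f x - (∑ y ∈ B, f y) / (B.card : ℝ)) ^ 2
      = (∑ x ∈ B, ∑ y ∈ B, (f x - f y) ^ 2) / (2 * B.card) := by
  have hn : (B.card : ℝ) ≠ 0 := Nat.cast_ne_zero.2 (Finset.card_ne_zero_of_mem hB.choose_spec)
  set n := (B.card : ℝ)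
  set Sf := ∑ y ∈ B, f y with hSf
  set S2 := ∑ y ∈ B, f y ^ 2 with hS2
  have h1 : ∑ x ∈ B, (f x - Sf / n) ^ 2 = S2 - Sf ^ 2 / n := by
    have : ∀ x ∈ B, (f x - Sf / n) ^ 2
        = f x ^ 2 - (2 * Sf / n) * f x + (Sf / n) ^ 2 := by
      intro x _; ring
    rw [Finset.sum_congr rfl this, Finset.sum_add_distrib, Finset.sum_sub_distrib,
      ← Finset.mul_sum, Finset.sum_const, nsmul_eq_mul, ← hSf, ← hS2]
    field_simp
    ring
  have h2 : ∑ x ∈ B, ∑ y ∈ B, (f x - f y) ^ 2 = 2 * n * S2 - 2 * Sf ^ 2 := by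
    have : ∀ x ∈ B, ∑ y ∈ B, (f x - f y) ^ 2
        = n * f x ^ 2 - 2 * f x * Sf + S2 := by
      intro x _
      have : ∀ y ∈ B, (f x - f y) ^ 2 = f x ^ 2 - 2 * f x * f y + f y ^ 2 := by
        intro y _; ring
      have e2 : ∀ y ∈ B, f x ^ 2 - 2 * f x * f y + f y ^ 2
          = f x ^ 2 + f y ^ 2 - (2 * f x) * f y := by intro y _; ring
      rw [Finset.sum_congr rfl this, Finset.sum_congr rfl e2, Finset.sum_sub_distrib,
        Finset.sum_add_distrib, ← Finset.mul_sum, Finset.sum_const, nsmul_eq_mul, ← hSf, ← hS2]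
      ring
    have e3 : ∀ x ∈ B, n * f x ^ 2 - 2 * f x * Sf + S2
        = (n * f x ^ 2 + S2) - (2 * Sf) * f x := by intro x _; ring
    rw [Finset.sum_congr rfl this, Finset.sum_congr rfl e3, Finset.sum_sub_distrib,
      Finset.sum_add_distrib, ← Finset.mul_sum, ← Finset.mul_sum, Finset.sum_const,
      nsmul_eq_mul, ← hSf, ← hS2]
    ring
  rw [h1, h2]
  field_simp


open PI in
/-- **Poincaré inequality** (Lemma 3.1). There is a constant `C = C(m,S)` such that for every
`p ∈ G`, `R > 0` and every `f`,
`Σ_{x ∈ B_R(p)} (f(x) - f_{B_R})² ≤ C R² Σ_{x,y ∈ B_{3R}(p), x ~ y} (f(x) - f(y))²`,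
where `f_{B_R}` is the average of `f` over `B_R(p)` and neighbors are counted with
multiplicity. -/
theorem poincare_inequality (m l : ℕ) (q : Fin l → ℕ) (hq : ∀ i, IsPrimePow (q i))
    (S : Multiset (AbG m l q))
    (hsym : S.map (fun s => -s) = S)
    (hgen : AddSubgroup.closure {s : AbG m l q | s ∈ S} = ⊤) :
    ∃ C : ℝ, 0 < C ∧ ∀ (p : AbG m l q) (R : ℝ), 0 < R → ∀ f : AbG m l q → ℝ,
      ∑ᶠ x ∈ ball S p R,
          (f x - (∑ᶠ y ∈ ball S p R, f y) / (Nat.card ↥(ball S p R) : ℝ)) ^ 2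
        ≤ C * R ^ 2 * ∑ᶠ x ∈ ball S p (3 * R),
            (S.map fun s =>
              Set.indicator (ball S p (3 * R)) (fun y => (f y - f x) ^ 2) (x + s)).sum := by
  classical
  haveI : ∀ i, NeZero (q i) := fun i => ⟨(hq i).pos.ne'⟩
  obtain ⟨Q, hQpos, hQcard⟩ : ∃ Q : ℕ, 0 < Q ∧ Fintype.card (∀ i : Fin l, ZMod (q i)) = Q :=
    ⟨_, Fintype.card_pos, rfl⟩
  obtain ⟨Knat, hK⟩ : ∃ K : ℕ, ∀ s ∈ S, ∀ j, |(Prod.fst s : Fin m → ℤ) j| ≤ (K : ℤ) := by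
    refine ⟨(S.map fun s => Finset.univ.sup fun j => ((Prod.fst s) j).natAbs).sup, ?_⟩
    intro s hs j
    have h1 : ((Prod.fst s) j).natAbs
        ≤ (S.map fun s => Finset.univ.sup fun j => ((Prod.fst s) j).natAbs).sup := by
      refine le_trans (Finset.le_sup (f := fun j => ((Prod.fst s) j).natAbs) (Finset.mem_univ j)) ?_
      exact Multiset.le_sup (Multiset.mem_map_of_mem _ hs)
    rw [Int.abs_eq_natAbs]
    exact_mod_cast h1
  obtain ⟨D, hD⟩ : ∃ D : ℕ, ∀ j : Fin m, wdist S 0 ((Pi.single j 1, 0) : AbG m l q) ≤ D :=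
    ⟨Finset.univ.sup fun j : Fin m => wdist S 0 ((Pi.single j 1, 0) : AbG m l q),
      fun j => Finset.le_sup (f := fun j : Fin m => wdist S 0 ((Pi.single j 1, 0) : AbG m l q))
        (Finset.mem_univ j)⟩
  obtain ⟨cR, hcRdef⟩ : ∃ c : ℝ, c = m * D + 1 := ⟨_, rfl⟩
  have hcR1 : 1 ≤ cR := by
    rw [hcRdef]
    have : (0:ℝ) ≤ (m : ℝ) * (D : ℝ) := by positivity
    linarith
  have hcR0 : 0 < cR := lt_of_lt_of_le one_pos hcR1
  obtain ⟨A, hAdef⟩ : ∃ a : ℝ, a = (4 * (Knat : ℝ) + 1) ^ m * Q := ⟨_, rfl⟩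
  have hA0 : 0 < A := by
    rw [hAdef]
    have h1 : (0:ℝ) < (4 * (Knat : ℝ) + 1) ^ m := by positivity
    have h2 : (0:ℝ) < (Q : ℝ) := by exact_mod_cast hQpos
    positivity
  obtain ⟨C, hCdef⟩ : ∃ c : ℝ, c = 2 * A * cR ^ m + 1 := ⟨_, rfl⟩
  have hC0 : 0 < C := by
    rw [hCdef]
    have : (0:ℝ) ≤ 2 * A * cR ^ m := by positivity
    linarith
  refine ⟨C, hC0, ?_⟩
  intro p R hR f
  -- Finsets
  have hFRfin := ball_finite hsym hgen p R
  have hF3fin := ball_finite hsym hgen p (3 * R)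
  have hcard : (Nat.card ↥(ball S p R) : ℝ) = (hFRfin.toFinset.card : ℝ) := by
    rw [Nat.card_coe_set_eq, Set.ncard_eq_toFinset_card _ hFRfin]
  rw [hcard]
  rw [finsum_mem_eq_finite_toFinset_sum _ hFRfin,
    finsum_mem_eq_finite_toFinset_sum _ hFRfin,
    finsum_mem_eq_finite_toFinset_sum _ hF3fin]
  set FR : Finset (AbG m l q) := hFRfin.toFinset with hFRdef
  set F3 : Finset (AbG m l q) := hF3fin.toFinset with hF3def
  have hFRmem : ∀ x, x ∈ FR ↔ (wdist S p x : ℝ) ≤ R := by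
    intro x
    rw [hFRdef, Set.Finite.mem_toFinset]
    rfl
  have hF3mem : ∀ x, x ∈ F3 ↔ (wdist S p x : ℝ) ≤ 3 * R := by
    intro x
    rw [hF3def, Set.Finite.mem_toFinset]
    rfl
  obtain ⟨T, hTdef⟩ : ∃ t : ℝ, t = ∑ x ∈ F3, (S.map fun s =>
    Set.indicator (ball S p (3 * R)) (fun y => (f y - f x) ^ 2) (x + s)).sum := ⟨_, rfl⟩
  rw [← hTdef]
  have hT0 : 0 ≤ T := by
    rw [hTdef]

    apply Finset.sum_nonneg
    intro x _
    apply Multiset.sum_nonneg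
    intro a ha
    obtain ⟨s, _, rfl⟩ := Multiset.mem_map.1 ha
    exact Set.indicator_nonneg (fun u _ => sq_nonneg _) _
  have hpFR : p ∈ FR := by
    rw [hFRmem, wdist_self]
    exact_mod_cast hR.le
  have hFRne : FR.Nonempty := ⟨p, hpFR⟩
  have hn0 : (0:ℝ) < (FR.card : ℝ) := by
    exact_mod_cast Finset.card_pos.2 hFRne
  rcases lt_or_ge R 1 with hR1 | hR1
  · -- R < 1 : the ball is a single point, LHS = 0
    have hFR1 : FR = {p} := by
      apply Finset.eq_singleton_iff_unique_mem.2
      refine ⟨hpFR, ?_⟩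
      intro x hx
      have h1 := (hFRmem x).1 hx
      have h2 : wdist S p x = 0 := by
        have : (wdist S p x : ℝ) < 1 := lt_of_le_of_lt h1 hR1
        exact_mod_cast Nat.lt_one_iff.1 (by exact_mod_cast this)
      exact (eq_of_wdist_eq_zero hsym hgen h2).symm
    rw [hFR1]
    simp only [Finset.sum_singleton, Finset.card_singleton, Nat.cast_one, div_one, sub_self,
      ne_eq, OfNat.ofNat_ne_zero, not_false_eq_true, zero_pow]
    exact mul_nonneg (mul_nonneg hC0.le (sq_nonneg R)) hT0
  · -- R ≥ 1
    have hFDfin := ball_finite hsym hgen (0 : AbG m l q) (2 * R)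
    set FD : Finset (AbG m l q) := hFDfin.toFinset with hFDdef
    have hFDmem : ∀ x, x ∈ FD ↔ (wdist S 0 x : ℝ) ≤ 2 * R := by
      intro x
      rw [hFDdef, Set.Finite.mem_toFinset]
      rfl
    have pairbound := pair_sum_bound hsym hgen p R hR.le f FR F3 FD hFRmem hF3mem hFDmem
    rw [← hTdef] at pairbound
    -- lower volume bound
    set N' : ℕ := ⌊R / cR⌋₊ with hN'def
    have hlow : ((N' + 1 : ℕ) : ℝ) ^ m ≤ (FR.card : ℝ) := by
      have h1 : (N' + 1) ^ m ≤ FR.card := by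
        apply lower_card hsym hgen D hD N' p FR
        intro x hx
        rw [hFRmem]
        have h2 : (m * (D * N') : ℝ) ≤ cR * N' := by
          rw [hcRdef]
          have : (0:ℝ) ≤ (N' : ℝ) := by positivity
          push_cast
          nlinarith
        have h3 : cR * N' ≤ R := by
          have h4 : (N' : ℝ) ≤ R / cR := Nat.floor_le (by positivity)
          calc cR * (N' : ℝ) ≤ cR * (R / cR) := by
                exact mul_le_mul_of_nonneg_left h4 hcR0.le
            _ = R := by field_simp
        have h5 : (wdist S p x : ℝ) ≤ (m * (D * N') : ℕ) := by exact_mod_cast hx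
        calc (wdist S p x : ℝ) ≤ ((m * (D * N') : ℕ) : ℝ) := h5
          _ = (m * (D * N') : ℝ) := by push_cast; ring
          _ ≤ cR * N' := h2
          _ ≤ R := h3
      exact_mod_cast h1
    have hlow2 : (R / cR) ^ m ≤ (FR.card : ℝ) := by
      refine le_trans ?_ hlow
      apply pow_le_pow_left₀ (by positivity)
      have := Nat.lt_floor_add_one (R / cR)
      push_cast
      linarith
    -- upper volume bound
    have hup : (FD.card : ℝ) ≤ A * R ^ m := by
      set n2 : ℕ := ⌊2 * R⌋₊ with hn2def
      have h1 : FD.card ≤ (2 * (n2 * Knat) + 1) ^ m * Q := by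
        rw [← hQcard]
        apply upper_card Knat hK hsym hgen n2 FD
        intro x hx
        exact Nat.le_floor ((hFDmem x).1 hx)
      have h2 : ((2 * (n2 * Knat) + 1 : ℕ) : ℝ) ≤ (4 * Knat + 1) * R := by
        have h3 : (n2 : ℝ) ≤ 2 * R := Nat.floor_le (by linarith)
        push_cast
        nlinarith [Nat.cast_nonneg (α := ℝ) Knat]
      calc (FD.card : ℝ) ≤ ((2 * (n2 * Knat) + 1 : ℕ) : ℝ) ^ m * Q := by
            exact_mod_cast h1
        _ ≤ ((4 * Knat + 1) * R) ^ m * Q := by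
            apply mul_le_mul_of_nonneg_right _ (by positivity)
            exact pow_le_pow_left₀ (by positivity) h2 m
        _ = A * R ^ m := by rw [hAdef, mul_pow]; ring
    -- key cardinality comparison
    have key : 4 * (FD.card : ℝ) ≤ 2 * (FR.card : ℝ) * C := by
      have hRm : (0:ℝ) < R ^ m := by positivity
      have hcRm : (0:ℝ) < cR ^ m := by positivity
      have hdivpow : (R / cR) ^ m = R ^ m / cR ^ m := div_pow R cR m
      rw [hdivpow] at hlow2
      have e1 : (R ^ m / cR ^ m) * cR ^ m = R ^ m := div_mul_cancel₀ _ hcRm.ne'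
      calc 4 * (FD.card : ℝ) ≤ 4 * (A * R ^ m) := by linarith
        _ = 2 * (R ^ m / cR ^ m) * (2 * A * cR ^ m) := by
            have e2 : 2 * (R ^ m / cR ^ m) * (2 * A * cR ^ m)
                = 4 * (A * ((R ^ m / cR ^ m) * cR ^ m)) := by ring
            rw [e2, e1]
        _ ≤ 2 * (R ^ m / cR ^ m) * C := by
            apply mul_le_mul_of_nonneg_left _ (by positivity)
            rw [hCdef]
            linarith
        _ ≤ 2 * (FR.card : ℝ) * C := by
            apply mul_le_mul_of_nonneg_right _ hC0.le
            linarith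
    -- conclude via the variance identity
    rw [variance_le FR hFRne f]
    rw [div_le_iff₀ (by positivity : (0:ℝ) < 2 * (FR.card : ℝ))]
    calc ∑ x ∈ FR, ∑ y ∈ FR, (f x - f y) ^ 2
        ≤ 2 * R * ((FD.card : ℝ) * (2 * R * T)) := pairbound
      _ = (4 * (FD.card : ℝ)) * (R ^ 2 * T) := by ring
      _ ≤ (2 * (FR.card : ℝ) * C) * (R ^ 2 * T) := by
          apply mul_le_mul_of_nonneg_right key (by positivity)
      _ = C * R ^ 2 * T * (2 * (FR.card : ℝ)) := by ring
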